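/- Let α_j = (j+1)^{−α}, β_j = (j+1)^{−β} with 1 > α > β > 0, let q_1, q_2 > 0 and q_min = min{q_1, q_2}. Then for n ≥ n_0 + 1: (1) if n_0 ≥ 2^{1/(α−β)}, then Σ_{k=n_0+1}^n e^{−q_2 Σ_{j=k+1}^n β_j} β_k e^{−q_1 Σ_{j=n_0+1}^k α_j} ≤ (2e^{q_min/2}/q_min) e^{−q_min Σ_{j=n_0+1}^n α_j}; (2) for any u ∈ R^∞_+ that is β-moderate from n_0 onwards, Σ_{k=n_0+1}^n e^{−q_2 Σ_{j=k+1}^n β_j} β_k (α_{k−1}/β_{k−1}) u_{k−1} ≤ (2e^{q_2/2}/q_2) (α_{n−1}/β_{n−1}) u_{n−1}; (3) if n_0 ≥ (3α/q_2)^{1/(1−β)} − 2, then Σ_{k=n_0+1}^n e^{−q_2 Σ_{j=k+1}^n β_j} β_k ε^{(θ)}_{k−1} ≤ (2e^{q_2/2}/q_2) ε^{(θ)}_{n−1}. -/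

import Mathlib

open scoped BigOperators

noncomputable section

/-- Stepsizes `(n+1)^{-a}`. -/
def steps (a : ℝ) (n : ℕ) : ℝ := ((n : ℝ) + 1) ^ (-a)

/-- A positive sequence `u` is `β`-moderate (parameters `α, β, q₂`) from `k₀` onwards if
`u_k / u_{k+1} ≤ (α_{k+1}/α_k)(β_k/β_{k+1}) e^{(q₂/2) β_{k+2}}` for all `k ≥ k₀`. -/
def BetaModerateFrom (α β q2 : ℝ) (u : ℕ → ℝ) (k0 : ℕ) : Prop :=
  ∀ k : ℕ, k0 ≤ k →
    u k / u (k + 1) ≤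
      (steps α (k + 1) / steps α k) * (steps β k / steps β (k + 1)) *
        Real.exp (q2 / 2 * steps β (k + 2))

lemma steps_pos (a : ℝ) (n : ℕ) : 0 < steps a n :=
  Real.rpow_pos_of_pos (by positivity) _

lemma steps_le_one (a : ℝ) (ha : 0 ≤ a) (n : ℕ) : steps a n ≤ 1 :=
  Real.rpow_le_one_of_one_le_of_nonpos (by norm_num) (by linarith)

lemma one_le_aux (lam : ℝ) (hlam : 0 < lam) : 1 ≤ Real.exp lam / lam := by
  rw [le_div_iff₀ hlam, one_mul]
  nlinarith [Real.add_one_le_exp lam]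

lemma key_ineq (lam x : ℝ) (hlam : 0 < lam) (hx : 0 ≤ x) (hx1 : x ≤ 1) :
    x + Real.exp (-lam * x) * (Real.exp lam / lam) ≤ Real.exp lam / lam := by
  have h3 : Real.exp (lam * (1 - x)) * Real.exp (lam * x) = Real.exp lam := by
    rw [← Real.exp_add]; ring_nf
  have h4 : Real.exp (-lam * x) * Real.exp lam = Real.exp (lam * (1 - x)) := by
    rw [← Real.exp_add]; ring_nf
  have h1 := Real.add_one_le_exp (lam * x)
  have h2 : (1:ℝ) ≤ Real.exp (lam * (1 - x)) := Real.one_le_exp (by nlinarith)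
  have h5 : 1 * (lam * x) ≤ Real.exp (lam * (1 - x)) * (Real.exp (lam * x) - 1) :=
    mul_le_mul h2 (by linarith) (by positivity) (by linarith)
  rw [one_mul] at h5
  have hmain : lam * x + Real.exp (-lam * x) * Real.exp lam ≤ Real.exp lam := by nlinarith
  rw [← sub_nonneg]
  have heq : Real.exp lam / lam - (x + Real.exp (-lam * x) * (Real.exp lam / lam))
      = (Real.exp lam - (lam * x + Real.exp (-lam * x) * Real.exp lam)) / lam := by
    field_simp
  rw [heq]
  exact div_nonneg (by linarith) hlam.le

lemma lemA (b lam : ℝ) (hb0 : 0 ≤ b) (hlam : 0 < lam) (m : ℕ) (n : ℕ) :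
    ∑ k ∈ Finset.Icc m n, steps b k * Real.exp (-lam * ∑ j ∈ Finset.Icc (k+1) n, steps b j)
      ≤ Real.exp lam / lam := by
  induction n with
  | zero =>
    rcases Nat.eq_zero_or_pos m with hm | hm
    · subst hm
      simp only [Finset.Icc_self, Finset.sum_singleton, show Finset.Icc 1 0 = ∅ from rfl,
        Finset.sum_empty, mul_zero, neg_zero, Real.exp_zero, mul_one]
      exact (steps_le_one b hb0 0).trans (one_le_aux lam hlam)
    · rw [Finset.Icc_eq_empty (by omega), Finset.sum_empty]
      positivity
  | succ n ih =>
    by_cases hmn : m ≤ n + 1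
    · rw [Finset.sum_Icc_succ_top hmn]
      have hterm : ∀ k ∈ Finset.Icc m n,
          steps b k * Real.exp (-lam * ∑ j ∈ Finset.Icc (k+1) (n+1), steps b j)
          = Real.exp (-lam * steps b (n+1)) *
            (steps b k * Real.exp (-lam * ∑ j ∈ Finset.Icc (k+1) n, steps b j)) := by
        intro k hk
        have hk' : k + 1 ≤ n + 1 := by
          have := (Finset.mem_Icc.1 hk).2; omega
        rw [Finset.sum_Icc_succ_top hk', mul_add, Real.exp_add]
        ring
      rw [Finset.sum_congr rfl hterm, ← Finset.mul_sum]
      have hin : ∑ j ∈ Finset.Icc (n+1+1) (n+1), steps b j = 0 := by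
        rw [Finset.Icc_eq_empty (by omega), Finset.sum_empty]
      rw [hin, mul_zero, Real.exp_zero, mul_one]
      have hbd : Real.exp (-lam * steps b (n+1)) *
          (∑ k ∈ Finset.Icc m n, steps b k * Real.exp (-lam * ∑ j ∈ Finset.Icc (k+1) n, steps b j))
          ≤ Real.exp (-lam * steps b (n+1)) * (Real.exp lam / lam) :=
        mul_le_mul_of_nonneg_left ih (Real.exp_pos _).le
      have hkey := key_ineq lam (steps b (n+1)) hlam (steps_pos b (n+1)).le (steps_le_one b hb0 (n+1))
      linarith
    · rw [Finset.Icc_eq_empty (by omega), Finset.sum_empty]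
      positivity

lemma lemB (b lam : ℝ) (w : ℕ → ℝ) (m : ℕ)
    (hstep : ∀ j, m ≤ j → w j ≤ w (j+1) * Real.exp (lam * steps b (j+1))) :
    ∀ a n, m ≤ a → a ≤ n → w a ≤ w n * Real.exp (lam * ∑ j ∈ Finset.Icc (a+1) n, steps b j) := by
  intro a n hma han
  induction n, han using Nat.le_induction with
  | base =>
    rw [Finset.Icc_eq_empty (by omega), Finset.sum_empty, mul_zero, Real.exp_zero, mul_one]
  | succ n han ih =>
    have h1 := hstep n (hma.trans han)
    calc w a ≤ w n * Real.exp (lam * ∑ j ∈ Finset.Icc (a+1) n, steps b j) := ih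
      _ ≤ (w (n+1) * Real.exp (lam * steps b (n+1))) *
            Real.exp (lam * ∑ j ∈ Finset.Icc (a+1) n, steps b j) :=
        mul_le_mul_of_nonneg_right h1 (Real.exp_pos _).le
      _ = w (n+1) * Real.exp (lam * ∑ j ∈ Finset.Icc (a+1) (n+1), steps b j) := by
        rw [Finset.sum_Icc_succ_top (by omega), mul_add, Real.exp_add]; ring

lemma lemC (b q2 : ℝ) (hb0 : 0 ≤ b) (hq2 : 0 < q2) (w : ℕ → ℝ) (m n : ℕ)
    (hwn : 0 ≤ w n)
    (hstep : ∀ j, m ≤ j → w j ≤ w (j+1) * Real.exp (q2/2 * steps b (j+1))) :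
    ∑ k ∈ Finset.Icc m n, Real.exp (-q2 * ∑ j ∈ Finset.Icc (k+1) n, steps b j) * steps b k * w k
      ≤ 2 * Real.exp (q2/2) / q2 * w n := by
  have hlam : 0 < q2 / 2 := by linarith
  calc ∑ k ∈ Finset.Icc m n, Real.exp (-q2 * ∑ j ∈ Finset.Icc (k+1) n, steps b j) * steps b k * w k
      ≤ ∑ k ∈ Finset.Icc m n,
          w n * (steps b k * Real.exp (-(q2/2) * ∑ j ∈ Finset.Icc (k+1) n, steps b j)) := by
        apply Finset.sum_le_sum
        intro k hk
        obtain ⟨hmk, hkn⟩ := Finset.mem_Icc.1 hk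
        have hw := lemB b (q2/2) w m hstep k n hmk hkn
        set S := ∑ j ∈ Finset.Icc (k+1) n, steps b j with hS
        have hS0 : 0 ≤ S := Finset.sum_nonneg fun j _ => (steps_pos b j).le
        calc Real.exp (-q2 * S) * steps b k * w k
            ≤ Real.exp (-q2 * S) * steps b k * (w n * Real.exp (q2/2 * S)) :=
              mul_le_mul_of_nonneg_left hw (mul_nonneg (Real.exp_pos _).le (steps_pos b k).le)
          _ = w n * (steps b k * (Real.exp (-q2 * S) * Real.exp (q2/2 * S))) := by ring
          _ = w n * (steps b k * Real.exp (-(q2/2) * S)) := by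
              rw [← Real.exp_add]; ring_nf
    _ = w n * ∑ k ∈ Finset.Icc m n,
          steps b k * Real.exp (-(q2/2) * ∑ j ∈ Finset.Icc (k+1) n, steps b j) := by
        rw [Finset.mul_sum]
    _ ≤ w n * (Real.exp (q2/2) / (q2/2)) :=
        mul_le_mul_of_nonneg_left (lemA b (q2/2) hb0 hlam m n) hwn
    _ = 2 * Real.exp (q2/2) / q2 * w n := by field_simp

set_option maxHeartbeats 1600000 in
/-- Lemma `IntComputation`.
Let `α_j = (j+1)^{−α}`, `β_j = (j+1)^{−β}` with `1 > α > β > 0`, `q₁, q₂ > 0`,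
`q_min = min {q₁, q₂}`, and `ε^{(θ)}_n = c (n+1)^{−α/2} √(ln (B(n+1)))` with `c > 0`, `B ≥ 1`.
Then, for `n ≥ n₀ + 1`:
(1) if `n₀ ≥ 2^{1/(α−β)}`, then
  `Σ_{k=n₀+1}^n e^{−q₂ Σ_{j=k+1}^n β_j} β_k e^{−q₁ Σ_{j=n₀+1}^k α_j}
     ≤ (2 e^{q_min/2}/q_min) e^{−q_min Σ_{j=n₀+1}^n α_j}`;
(2) for any positive `u` that is `β`-moderate from `n₀` onwards,
  `Σ_{k=n₀+1}^n e^{−q₂ Σ_{j=k+1}^n β_j} β_k (α_{k−1}/β_{k−1}) u_{k−1}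
     ≤ (2 e^{q₂/2}/q₂) (α_{n−1}/β_{n−1}) u_{n−1}`;
(3) if `n₀ ≥ (3α/q₂)^{1/(1−β)} − 2`, then
  `Σ_{k=n₀+1}^n e^{−q₂ Σ_{j=k+1}^n β_j} β_k ε^{(θ)}_{k−1} ≤ (2 e^{q₂/2}/q₂) ε^{(θ)}_{n−1}`. -/
theorem stmt15 (α β q1 q2 c B : ℝ)
    (hβ : 0 < β) (hβα : β < α) (hα : α < 1)
    (hq1 : 0 < q1) (hq2 : 0 < q2) (hc : 0 < c) (hB : 1 ≤ B)
    (n0 n : ℕ) (hn : n0 + 1 ≤ n) :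
    (((2 : ℝ) ^ (1 / (α - β)) ≤ (n0 : ℝ)) →
      ∑ k ∈ Finset.Icc (n0 + 1) n,
          Real.exp (-q2 * ∑ j ∈ Finset.Icc (k + 1) n, steps β j) * steps β k *
            Real.exp (-q1 * ∑ j ∈ Finset.Icc (n0 + 1) k, steps α j)
        ≤ 2 * Real.exp (min q1 q2 / 2) / min q1 q2 *
            Real.exp (-(min q1 q2) * ∑ j ∈ Finset.Icc (n0 + 1) n, steps α j)) ∧
    (∀ u : ℕ → ℝ, (∀ k, 0 < u k) → BetaModerateFrom α β q2 u n0 →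
      ∑ k ∈ Finset.Icc (n0 + 1) n,
          Real.exp (-q2 * ∑ j ∈ Finset.Icc (k + 1) n, steps β j) * steps β k *
            (steps α (k - 1) / steps β (k - 1) * u (k - 1))
        ≤ 2 * Real.exp (q2 / 2) / q2 * (steps α (n - 1) / steps β (n - 1) * u (n - 1))) ∧
    (((3 * α / q2) ^ (1 / (1 - β)) - 2 ≤ (n0 : ℝ)) →
      ∑ k ∈ Finset.Icc (n0 + 1) n,
          Real.exp (-q2 * ∑ j ∈ Finset.Icc (k + 1) n, steps β j) * steps β k *
            (c * ((k : ℝ)) ^ (-(α / 2)) * Real.sqrt (Real.log (B * (k : ℝ))))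
        ≤ 2 * Real.exp (q2 / 2) / q2 *
            (c * ((n : ℝ)) ^ (-(α / 2)) * Real.sqrt (Real.log (B * (n : ℝ)))))  := by
  have hα0 : 0 < α := hβ.trans hβα
  refine ⟨?_, ?_, ?_⟩
  · intro hcond
    set qm := min q1 q2 with hqmdef
    have hqm0 : 0 < qm := lt_min hq1 hq2
    have hqm1 : qm ≤ q1 := min_le_left _ _
    have hqm2 : qm ≤ q2 := min_le_right _ _
    set An := ∑ j ∈ Finset.Icc (n0 + 1) n, steps α j with hAn
    calc ∑ k ∈ Finset.Icc (n0 + 1) n,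
            Real.exp (-q2 * ∑ j ∈ Finset.Icc (k + 1) n, steps β j) * steps β k *
              Real.exp (-q1 * ∑ j ∈ Finset.Icc (n0 + 1) k, steps α j)
        ≤ ∑ k ∈ Finset.Icc (n0 + 1) n,
            Real.exp (-qm * An) *
              (steps β k * Real.exp (-(qm/2) * ∑ j ∈ Finset.Icc (k + 1) n, steps β j)) := by
          apply Finset.sum_le_sum
          intro k hk
          obtain ⟨hk1, hk2⟩ := Finset.mem_Icc.1 hk
          set S := ∑ j ∈ Finset.Icc (k + 1) n, steps β j with hS
          set Ak := ∑ j ∈ Finset.Icc (n0 + 1) k, steps α j with hAk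
          set S' := ∑ j ∈ Finset.Icc (k + 1) n, steps α j with hS'
          have hS0 : 0 ≤ S := Finset.sum_nonneg fun j _ => (steps_pos β j).le
          have hA0 : 0 ≤ Ak := Finset.sum_nonneg fun j _ => (steps_pos α j).le
          have hsplit : Ak + S' = An := by
            rw [hAk, hS', hAn]
            have e1 : ∀ a b : ℕ, Finset.Icc (a+1) b = Finset.Ioc a b := fun a b =>
              by ext x; simp only [Finset.mem_Icc, Finset.mem_Ioc]; omega
            rw [e1, e1, e1]
            exact Finset.sum_Ioc_consecutive _ (by omega) hk2
          have hhalf : S' ≤ S / 2 := by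
            have hterm : ∀ j ∈ Finset.Icc (k+1) n, steps α j ≤ steps β j / 2 := by
              intro j hj
              have hj1 := (Finset.mem_Icc.1 hj).1
              have hj2 : (2:ℝ) ^ (1/(α-β)) ≤ (j:ℝ) + 1 := by
                refine hcond.trans ?_
                have : (n0:ℝ) ≤ (j:ℝ) := by exact_mod_cast (by omega : n0 ≤ j)
                linarith
              have h2 : (2:ℝ) ≤ ((j:ℝ)+1) ^ (α-β) := by
                calc (2:ℝ) = ((2:ℝ) ^ (1/(α-β))) ^ (α-β) := by
                      rw [← Real.rpow_mul (by norm_num), one_div,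
                        inv_mul_cancel₀ (by linarith : α - β ≠ 0), Real.rpow_one]
                  _ ≤ _ := Real.rpow_le_rpow (Real.rpow_nonneg (by norm_num) _) hj2 (by linarith)
              have hsp : steps β j = steps α j * ((j:ℝ)+1) ^ (α-β) := by
                unfold steps
                rw [← Real.rpow_add (by positivity)]
                ring_nf
              rw [hsp]
              nlinarith [steps_pos α j]
            calc S' ≤ ∑ j ∈ Finset.Icc (k+1) n, steps β j / 2 := Finset.sum_le_sum hterm
              _ = S / 2 := by rw [← Finset.sum_div]
          have lhs_eq : Real.exp (-q2 * S) * steps β k * Real.exp (-q1 * Ak)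
              = steps β k * Real.exp (-q2 * S + -q1 * Ak) := by
            rw [Real.exp_add]; ring
          have rhs_eq : Real.exp (-qm * An) * (steps β k * Real.exp (-(qm/2) * S))
              = steps β k * Real.exp (-qm * An + -(qm/2) * S) := by
            rw [Real.exp_add]; ring
          rw [lhs_eq, rhs_eq]
          apply mul_le_mul_of_nonneg_left _ (steps_pos β k).le
          apply Real.exp_le_exp.2
          have f1 : qm * S' ≤ qm * (S/2) := mul_le_mul_of_nonneg_left hhalf hqm0.le
          have f2 : qm * Ak ≤ q1 * Ak := mul_le_mul_of_nonneg_right hqm1 hA0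
          have f3 : qm * S ≤ q2 * S := mul_le_mul_of_nonneg_right hqm2 hS0
          have : An = Ak + S' := hsplit.symm
          rw [this]
          nlinarith
      _ = Real.exp (-qm * An) * ∑ k ∈ Finset.Icc (n0 + 1) n,
            steps β k * Real.exp (-(qm/2) * ∑ j ∈ Finset.Icc (k + 1) n, steps β j) := by
          rw [← Finset.mul_sum]
      _ ≤ Real.exp (-qm * An) * (Real.exp (qm/2) / (qm/2)) :=
          mul_le_mul_of_nonneg_left (lemA β (qm/2) hβ.le (by linarith) (n0+1) n)
            (Real.exp_pos _).le
      _ = 2 * Real.exp (qm/2) / qm * Real.exp (-qm * An) := by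
          field_simp
  · intro u hu hmod
    apply lemC β q2 hβ.le hq2 (fun k => steps α (k - 1) / steps β (k - 1) * u (k - 1)) (n0+1) n
    · exact mul_nonneg (div_nonneg (steps_pos α _).le (steps_pos β _).le) (hu _).le
    · intro j hj
      obtain ⟨j', rfl⟩ : ∃ j', j = j' + 1 := ⟨j - 1, by omega⟩
      simp only [Nat.add_sub_cancel]
      have hm := hmod j' (by omega)
      have h := (div_le_iff₀ (hu (j'+1))).1 hm
      have p1 := steps_pos α j'
      have p2 := steps_pos β j'
      have p3 := steps_pos α (j'+1)
      have p4 := steps_pos β (j'+1)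
      calc steps α j' / steps β j' * u j'
          ≤ steps α j' / steps β j' *
              ((steps α (j'+1) / steps α j') * (steps β j' / steps β (j'+1)) *
                Real.exp (q2/2 * steps β (j'+2)) * u (j'+1)) :=
            mul_le_mul_of_nonneg_left h (by positivity)
        _ = steps α (j'+1) / steps β (j'+1) * u (j'+1) *
              Real.exp (q2/2 * steps β (j'+1+1)) := by
            field_simp
  · intro hcond
    have hα0 : 0 < α := hβ.trans hβα
    apply lemC β q2 hβ.le hq2
      (fun k => c * ((k : ℝ)) ^ (-(α / 2)) * Real.sqrt (Real.log (B * (k : ℝ)))) (n0+1) n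
    · exact mul_nonneg (mul_nonneg hc.le (Real.rpow_nonneg (Nat.cast_nonneg n) _))
        (Real.sqrt_nonneg _)
    · intro j hj
      have hj1 : 1 ≤ j := by omega
      have hjR : (1:ℝ) ≤ (j:ℝ) := by exact_mod_cast hj1
      have hj0 : (0:ℝ) < (j:ℝ) := by linarith
      have h3a : 0 < 3 * α / q2 := by positivity
      have hn0R : ((n0:ℝ)) + 1 ≤ (j:ℝ) := by exact_mod_cast hj
      have hc2 : ((3 * α / q2 : ℝ)) ^ (1/(1-β)) ≤ (j:ℝ) + 2 := by linarith
      have hpow1 : 3 * α / q2 ≤ ((j:ℝ)+2) ^ (1-β) := by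
        calc 3 * α / q2 = ((3 * α / q2) ^ (1/(1-β))) ^ (1-β) := by
              rw [← Real.rpow_mul h3a.le, one_div,
                inv_mul_cancel₀ (by linarith : (1:ℝ) - β ≠ 0), Real.rpow_one]
          _ ≤ _ := Real.rpow_le_rpow (Real.rpow_nonneg h3a.le _) hc2 (by linarith)
      have htb : 0 < ((j:ℝ)+2) ^ β := Real.rpow_pos_of_pos (by linarith) β
      have hkey2 : α * ((j:ℝ)+2) ^ β ≤ q2 * (j:ℝ) := by
        have hsplit : ((j:ℝ)+2) ^ (1-β) = ((j:ℝ)+2) / ((j:ℝ)+2) ^ β := by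
          rw [Real.rpow_sub (by linarith), Real.rpow_one]
        have h1 : q2 * (3 * α / q2) ≤ q2 * (((j:ℝ)+2) / ((j:ℝ)+2) ^ β) := by
          rw [← hsplit]; exact mul_le_mul_of_nonneg_left hpow1 hq2.le
        have hD : ((j:ℝ)+2) / ((j:ℝ)+2) ^ β * ((j:ℝ)+2) ^ β = (j:ℝ)+2 :=
          div_mul_cancel₀ _ htb.ne'
        have h1' : 3 * α = q2 * (3 * α / q2) := by field_simp
        nlinarith [mul_le_mul_of_nonneg_right h1 htb.le]
      have hE : α/2 * (1/(j:ℝ)) ≤ q2/2 * steps β (j+1) := by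
        have hsb : steps β (j+1) = 1 / ((j:ℝ)+2) ^ β := by
          unfold steps
          push_cast
          rw [Real.rpow_neg (by linarith), inv_eq_one_div]
          ring_nf
        rw [hsb, mul_one_div, mul_one_div, div_le_div_iff₀ hj0 htb]
        linarith
      have hpow : ((j:ℝ)) ^ (-(α/2)) ≤ ((j:ℝ)+1) ^ (-(α/2)) * Real.exp (q2/2 * steps β (j+1)) := by
        rw [Real.rpow_def_of_pos hj0, Real.rpow_def_of_pos (by linarith), ← Real.exp_add]
        apply Real.exp_le_exp.2
        have hlog2 : Real.log ((j:ℝ)+1) - Real.log (j:ℝ) ≤ 1/(j:ℝ) := by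
          rw [← Real.log_div (by linarith) (by linarith)]
          have h := Real.log_le_sub_one_of_pos (show (0:ℝ) < ((j:ℝ)+1)/(j:ℝ) by positivity)
          have : ((j:ℝ)+1)/(j:ℝ) - 1 = 1/(j:ℝ) := by field_simp; ring
          linarith
        have := mul_le_mul_of_nonneg_left hlog2 (by linarith : (0:ℝ) ≤ α/2)
        nlinarith
      have hsqrt : Real.sqrt (Real.log (B * (j:ℝ))) ≤ Real.sqrt (Real.log (B * ((j:ℝ)+1))) := by
        apply Real.sqrt_le_sqrt
        apply Real.log_le_log (by positivity)
        nlinarith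
      show c * ((j:ℝ)) ^ (-(α/2)) * Real.sqrt (Real.log (B * (j:ℝ)))
          ≤ c * (((j+1:ℕ):ℝ)) ^ (-(α/2)) * Real.sqrt (Real.log (B * ((j+1:ℕ):ℝ))) *
            Real.exp (q2/2 * steps β (j+1))
      push_cast
      calc c * ((j:ℝ)) ^ (-(α/2)) * Real.sqrt (Real.log (B * (j:ℝ)))
          ≤ c * (((j:ℝ)+1) ^ (-(α/2)) * Real.exp (q2/2 * steps β (j+1))) *
              Real.sqrt (Real.log (B * ((j:ℝ)+1))) := by
            apply mul_le_mul (mul_le_mul_of_nonneg_left hpow hc.le) hsqrt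
              (Real.sqrt_nonneg _) (by positivity)
        _ = c * ((j:ℝ)+1) ^ (-(α/2)) * Real.sqrt (Real.log (B * ((j:ℝ)+1))) *
              Real.exp (q2/2 * steps β (j+1)) := by
            ring
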